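/- In the Galerkin setting below, if the operator T̃ : V → V is invertible (equivalently, the matrix M⁻¹A is invertible), then cond(M)^{−1/2} · ‖T̃⁻¹‖ ≤ ‖(M⁻¹ A)⁻¹‖₂ ≤ cond(M)^{1/2} · ‖T̃⁻¹‖. -/

import Mathlib

/-- The matrix operator norm induced by the Euclidean norm. -/
noncomputable def matNorm {n : ℕ} (B : Matrix (Fin n) (Fin n) ℂ) : ℝ :=
  ‖(Matrix.toEuclideanCLM (𝕜 := ℂ) B : EuclideanSpace ℂ (Fin n) →L[ℂ] EuclideanSpace ℂ (Fin n))‖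

/-- The Galerkin truncation `T̃ := (P ∘ T)|_V : V → V`, where `V = span{φ_1,…,φ_n}` and
`P` is the orthogonal projection onto `V`. -/
noncomputable def galerkinTrunc {H : Type*} [NormedAddCommGroup H] [InnerProductSpace ℂ H]
    {n : ℕ} (T : H →L[ℂ] H) (φ : Fin n → H) :
    Submodule.span ℂ (Set.range φ) →L[ℂ] Submodule.span ℂ (Set.range φ) :=
  haveI : FiniteDimensional ℂ (Submodule.span ℂ (Set.range φ)) :=
    FiniteDimensional.span_of_finite ℂ (Set.finite_range φ)
  ((Submodule.span ℂ (Set.range φ)).orthogonalProjection).comp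
    (T.comp (Submodule.span ℂ (Set.range φ)).subtypeL)

section Aux

variable {H : Type*} [NormedAddCommGroup H] [InnerProductSpace ℂ H]
  {n : ℕ} {φ : Fin n → H} {M : Matrix (Fin n) (Fin n) ℂ}

lemma matNorm_nonneg {n : ℕ} (B : Matrix (Fin n) (Fin n) ℂ) : 0 ≤ matNorm B :=
  norm_nonneg _

lemma matCLM_apply {n : ℕ} (B : Matrix (Fin n) (Fin n) ℂ) (y : EuclideanSpace ℂ (Fin n))
    (i : Fin n) : Matrix.toEuclideanCLM (𝕜 := ℂ) B y i = ∑ j, B i j * y j := rfl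

lemma aux_inner (hM : ∀ i j, M i j = (inner ℂ (φ i) (φ j) : ℂ)) (x y : EuclideanSpace ℂ (Fin n)) :
    (inner ℂ (∑ i, x i • φ i) (∑ j, y j • φ j) : ℂ)
      = inner ℂ x (Matrix.toEuclideanCLM (𝕜 := ℂ) M y) := by
  simp only [inner_sum, sum_inner, inner_smul_left, inner_smul_right, PiLp.inner_apply,
    RCLike.inner_apply, matCLM_apply, hM, Finset.mul_sum]
  rw [Finset.sum_comm]
  exact Finset.sum_congr rfl fun i _ => by
    rw [Finset.sum_mul]; exact Finset.sum_congr rfl fun j _ => by ring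

lemma aux_norm_up (hM : ∀ i j, M i j = (inner ℂ (φ i) (φ j) : ℂ)) (x : EuclideanSpace ℂ (Fin n)) :
    ‖∑ i, x i • φ i‖ ≤ Real.sqrt (matNorm M) * ‖x‖ := by
  have h1 : ‖∑ i, x i • φ i‖ ^ 2 ≤ matNorm M * ‖x‖ ^ 2 := by
    rw [norm_sq_eq_re_inner (𝕜 := ℂ), aux_inner hM x x]
    calc RCLike.re (inner ℂ x (Matrix.toEuclideanCLM (𝕜 := ℂ) M x) : ℂ)
        ≤ ‖(inner ℂ x (Matrix.toEuclideanCLM (𝕜 := ℂ) M x) : ℂ)‖ :=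
          (RCLike.re_le_norm _)
      _ ≤ ‖x‖ * ‖Matrix.toEuclideanCLM (𝕜 := ℂ) M x‖ := norm_inner_le_norm _ _
      _ ≤ ‖x‖ * (matNorm M * ‖x‖) := by
          gcongr; exact (Matrix.toEuclideanCLM (𝕜 := ℂ) M).le_opNorm x
      _ = matNorm M * ‖x‖ ^ 2 := by ring
  calc ‖∑ i, x i • φ i‖ = Real.sqrt (‖∑ i, x i • φ i‖ ^ 2) :=
        (Real.sqrt_sq (norm_nonneg _)).symm
    _ ≤ Real.sqrt (matNorm M * ‖x‖ ^ 2) := Real.sqrt_le_sqrt h1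
    _ = Real.sqrt (matNorm M) * ‖x‖ := by
        rw [Real.sqrt_mul (matNorm_nonneg M), Real.sqrt_sq (norm_nonneg _)]

lemma aux_det_isUnit (hφ : LinearIndependent ℂ φ)
    (hM : ∀ i j, M i j = (inner ℂ (φ i) (φ j) : ℂ)) : IsUnit M := by
  rw [← Matrix.mulVec_injective_iff_isUnit]
  have hker : ∀ x : EuclideanSpace ℂ (Fin n), M.mulVec x = 0 → x = 0 := by
    intro x hx
    have hCM : Matrix.toEuclideanCLM (𝕜 := ℂ) M x = 0 := by
      exact congrArg (WithLp.toLp 2) hx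
    have h := aux_inner hM x x
    rw [hCM, inner_zero_right, inner_self_eq_zero] at h
    have h2 := linearIndependent_iff'.mp hφ Finset.univ (fun i => x i) h
    ext i
    exact h2 i (Finset.mem_univ i)
  intro a b hab
  have := hker (WithLp.toLp 2 (a - b)) (by rw [Matrix.mulVec_sub, hab, sub_self])
  exact sub_eq_zero.mp (congrArg WithLp.ofLp this)

lemma aux_norm_down (hφ : LinearIndependent ℂ φ)
    (hM : ∀ i j, M i j = (inner ℂ (φ i) (φ j) : ℂ)) (x : EuclideanSpace ℂ (Fin n)) :
    ‖x‖ ≤ Real.sqrt (matNorm M⁻¹) * ‖∑ i, x i • φ i‖ := by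
  have hU : IsUnit M := aux_det_isUnit hφ hM
  have hMM : M * M⁻¹ = 1 := Matrix.mul_nonsing_inv M (Matrix.isUnit_iff_isUnit_det M |>.mp hU)
  set CInv := Matrix.toEuclideanCLM (𝕜 := ℂ) M⁻¹ with hCInv
  set u : EuclideanSpace ℂ (Fin n) := CInv x with hu
  have hCMu : Matrix.toEuclideanCLM (𝕜 := ℂ) M u = x := by
    rw [hu, ← ContinuousLinearMap.comp_apply, ← ContinuousLinearMap.mul_def,
      ← map_mul, hMM, map_one, ContinuousLinearMap.one_apply]
  -- step a : ‖∑ u i • φ i‖ ≤ sqrt (matNorm M⁻¹) * ‖x‖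
  have ha : ‖∑ i, u i • φ i‖ ≤ Real.sqrt (matNorm M⁻¹) * ‖x‖ := by
    have h1 : ‖∑ i, u i • φ i‖ ^ 2 ≤ matNorm M⁻¹ * ‖x‖ ^ 2 := by
      rw [norm_sq_eq_re_inner (𝕜 := ℂ), aux_inner hM u u, hCMu]
      calc RCLike.re (inner ℂ u x : ℂ) ≤ ‖(inner ℂ u x : ℂ)‖ := RCLike.re_le_norm _
        _ ≤ ‖u‖ * ‖x‖ := norm_inner_le_norm _ _
        _ ≤ matNorm M⁻¹ * ‖x‖ * ‖x‖ := by
            gcongr; exact (Matrix.toEuclideanCLM (𝕜 := ℂ) M⁻¹).le_opNorm x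
        _ = matNorm M⁻¹ * ‖x‖ ^ 2 := by ring
    calc ‖∑ i, u i • φ i‖ = Real.sqrt (‖∑ i, u i • φ i‖ ^ 2) :=
          (Real.sqrt_sq (norm_nonneg _)).symm
      _ ≤ Real.sqrt (matNorm M⁻¹ * ‖x‖ ^ 2) := Real.sqrt_le_sqrt h1
      _ = Real.sqrt (matNorm M⁻¹) * ‖x‖ := by
          rw [Real.sqrt_mul (matNorm_nonneg _), Real.sqrt_sq (norm_nonneg _)]
  -- step b : ‖x‖^2 ≤ ‖∑ x i • φ i‖ * ‖∑ u i • φ i‖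
  have hb : ‖x‖ ^ 2 ≤ ‖∑ i, x i • φ i‖ * ‖∑ i, u i • φ i‖ := by
    have h2 : (inner ℂ (∑ i, x i • φ i) (∑ j, u j • φ j) : ℂ) = inner ℂ x x := by
      rw [aux_inner hM x u, hCMu]
    have h3 : ‖x‖ ^ 2 = RCLike.re (inner ℂ (∑ i, x i • φ i) (∑ j, u j • φ j) : ℂ) := by
      rw [h2, ← norm_sq_eq_re_inner (𝕜 := ℂ)]
    rw [h3]
    calc RCLike.re (inner ℂ (∑ i, x i • φ i) (∑ j, u j • φ j) : ℂ)
        ≤ ‖(inner ℂ (∑ i, x i • φ i) (∑ j, u j • φ j) : ℂ)‖ := RCLike.re_le_norm _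
      _ ≤ ‖∑ i, x i • φ i‖ * ‖∑ i, u i • φ i‖ := norm_inner_le_norm _ _
  rcases eq_or_lt_of_le (norm_nonneg x) with h0 | h0
  · rw [← h0]
    positivity
  · have : ‖x‖ * ‖x‖ ≤ (Real.sqrt (matNorm M⁻¹) * ‖∑ i, x i • φ i‖) * ‖x‖ := by
      calc ‖x‖ * ‖x‖ = ‖x‖ ^ 2 := (sq ‖x‖).symm
        _ ≤ ‖∑ i, x i • φ i‖ * ‖∑ i, u i • φ i‖ := hb
        _ ≤ ‖∑ i, x i • φ i‖ * (Real.sqrt (matNorm M⁻¹) * ‖x‖) := by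
            gcongr
        _ = (Real.sqrt (matNorm M⁻¹) * ‖∑ i, x i • φ i‖) * ‖x‖ := by ring
    exact le_of_mul_le_mul_right this h0

end Aux

theorem galerkin_matrix_inverse_norm_two_sided_bound
    {H : Type*} [NormedAddCommGroup H] [InnerProductSpace ℂ H] [CompleteSpace H]
    {n : ℕ} (T : H →L[ℂ] H) (φ : Fin n → H) (hφ : LinearIndependent ℂ φ)
    -- the mass (Gram) matrix `M` and the Galerkin matrix `A`
    (M A : Matrix (Fin n) (Fin n) ℂ)
    (hM : ∀ i j, M i j = (inner ℂ (φ i) (φ j) : ℂ))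
    (hA : ∀ i j, A i j = (inner ℂ (φ i) (T (φ j)) : ℂ))
    -- `T̃ : V → V` is invertible, with (continuous) inverse `Tinv`
    (Tinv : Submodule.span ℂ (Set.range φ) →L[ℂ] Submodule.span ℂ (Set.range φ))
    (hTinv₁ : galerkinTrunc T φ * Tinv = 1) (hTinv₂ : Tinv * galerkinTrunc T φ = 1) :
    (Real.sqrt (matNorm M * matNorm M⁻¹))⁻¹ * ‖Tinv‖ ≤ matNorm (M⁻¹ * A)⁻¹ ∧
    matNorm (M⁻¹ * A)⁻¹ ≤ Real.sqrt (matNorm M * matNorm M⁻¹) * ‖Tinv‖ := by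
  haveI : FiniteDimensional ℂ (Submodule.span ℂ (Set.range φ)) :=
    FiniteDimensional.span_of_finite ℂ (Set.finite_range φ)
  let b : Module.Basis (Fin n) ℂ (Submodule.span ℂ (Set.range φ)) := Module.Basis.span hφ
  have hb : ∀ i, (b i : H) = φ i := fun i => congrArg Subtype.val (Module.Basis.span_apply hφ i)
  have hUdet : IsUnit M.det := (Matrix.isUnit_iff_isUnit_det M).mp (aux_det_isUnit hφ hM)
  set Tt := galerkinTrunc T φ with hTt
  set G := LinearMap.toMatrix b b (Tt : Submodule.span ℂ (Set.range φ) →ₗ[ℂ] Submodule.span ℂ (Set.range φ)) with hG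
  set B := LinearMap.toMatrix b b (Tinv : Submodule.span ℂ (Set.range φ) →ₗ[ℂ] Submodule.span ℂ (Set.range φ)) with hB
  -- coercion of elements of V as combinations
  have f1 : ∀ v : Submodule.span ℂ (Set.range φ), (v : H) = ∑ i, (b.repr v) i • φ i := by
    intro v
    conv_lhs => rw [← b.sum_repr v]
    push_cast
    simp [hb]
  -- M * G = A
  have hMG : M * G = A := by
    ext i j
    have : (M * G) i j = ∑ k, (inner ℂ (φ i) (φ k) : ℂ) * (b.repr (Tt (b j))) k := by
      simp [Matrix.mul_apply, hM, hG, LinearMap.toMatrix_apply]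
    rw [this, hA]
    have h2 : ∑ k, (inner ℂ (φ i) (φ k) : ℂ) * (b.repr (Tt (b j))) k
        = (inner ℂ (φ i) ((Tt (b j) : H)) : ℂ) := by
      rw [f1 (Tt (b j)), inner_sum]
      exact Finset.sum_congr rfl fun k _ => by rw [inner_smul_right]; ring
    rw [h2]
    -- ⟪φ i, P (T (φ j))⟫ = ⟪φ i, T (φ j)⟫
    have hmem : φ i ∈ Submodule.span ℂ (Set.range φ) := Submodule.subset_span ⟨i, rfl⟩
    have hTtb : (Tt (b j) : H) = ((Submodule.span ℂ (Set.range φ)).orthogonalProjection (T (φ j)) : H) := by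
      simp only [hTt, galerkinTrunc, ContinuousLinearMap.comp_apply,
        Submodule.subtypeL_apply, hb]
    rw [hTtb]
    have := (Submodule.span ℂ (Set.range φ)).starProjection_inner_eq_zero (T (φ j)) (φ i) hmem
    have h4 : (inner ℂ (T (φ j) - ((Submodule.span ℂ (Set.range φ)).orthogonalProjection (T (φ j)) : H)) (φ i) : ℂ) = 0 := this
    have h5 : (inner ℂ (φ i) (T (φ j) - ((Submodule.span ℂ (Set.range φ)).orthogonalProjection (T (φ j)) : H)) : ℂ) = 0 := by
      rw [← inner_conj_symm, h4, map_zero]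
    rw [inner_sub_right] at h5
    exact (sub_eq_zero.mp h5).symm
  -- G is invertible with inverse B
  have hcomp1 : G * B = 1 := by
    rw [hG, hB, ← LinearMap.toMatrix_comp b b b]
    have h1 : (Tt : Submodule.span ℂ (Set.range φ) →ₗ[ℂ] Submodule.span ℂ (Set.range φ)) ∘ₗ (Tinv : Submodule.span ℂ (Set.range φ) →ₗ[ℂ] Submodule.span ℂ (Set.range φ)) = LinearMap.id := by
      rw [← ContinuousLinearMap.toLinearMap_comp, ← ContinuousLinearMap.mul_def, hTinv₁]
      rfl
    rw [h1, LinearMap.toMatrix_id]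
  have hGinv : G⁻¹ = B := Matrix.inv_eq_right_inv hcomp1
  have hMA : M⁻¹ * A = G := by
    rw [← hMG, ← Matrix.mul_assoc, Matrix.nonsing_inv_mul M hUdet, Matrix.one_mul]
  have hBA : (M⁻¹ * A)⁻¹ = B := by rw [hMA, hGinv]
  rw [hBA]
  -- the coordinate map
  set X : Submodule.span ℂ (Set.range φ) → EuclideanSpace ℂ (Fin n) :=
    fun v => (WithLp.equiv 2 (Fin n → ℂ)).symm (b.repr v) with hX
  have f1' : ∀ v : Submodule.span ℂ (Set.range φ), (v : H) = ∑ i, X v i • φ i := fun v => f1 v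
  have hnc : ∀ w : Submodule.span ℂ (Set.range φ), ‖(w : H)‖ = ‖w‖ := fun w => rfl
  have f3 : ∀ v : Submodule.span ℂ (Set.range φ),
      Matrix.toEuclideanCLM (𝕜 := ℂ) B (X v) = X (Tinv v) := by
    intro v
    have h0 : Matrix.toEuclideanCLM (𝕜 := ℂ) B (X v)
        = (WithLp.equiv 2 (Fin n → ℂ)).symm (B.mulVec (b.repr v)) := rfl
    rw [h0, hB, LinearMap.toMatrix_mulVec_repr]
    rfl
  have hXsurj : ∀ x : EuclideanSpace ℂ (Fin n),
      X (b.equivFun.symm ((WithLp.equiv 2 (Fin n → ℂ)) x)) = x := by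
    intro x
    show (WithLp.equiv 2 (Fin n → ℂ)).symm (b.repr _) = x
    rw [← Module.Basis.equivFun_apply, LinearEquiv.apply_symm_apply]
    rfl
  have hupper : matNorm B ≤ Real.sqrt (matNorm M * matNorm M⁻¹) * ‖Tinv‖ := by
    refine ContinuousLinearMap.opNorm_le_bound _
      (mul_nonneg (Real.sqrt_nonneg _) Tinv.opNorm_nonneg) ?_
    intro x
    set v := b.equivFun.symm ((WithLp.equiv 2 (Fin n → ℂ)) x) with hv
    have hXv : X v = x := hXsurj x
    calc ‖Matrix.toEuclideanCLM (𝕜 := ℂ) B x‖ = ‖X (Tinv v)‖ := by rw [← hXv, f3]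
      _ ≤ Real.sqrt (matNorm M⁻¹) * ‖∑ i, X (Tinv v) i • φ i‖ := aux_norm_down hφ hM _
      _ = Real.sqrt (matNorm M⁻¹) * ‖Tinv v‖ := by rw [← f1' (Tinv v), hnc]
      _ ≤ Real.sqrt (matNorm M⁻¹) * (‖Tinv‖ * ‖v‖) :=
          mul_le_mul_of_nonneg_left (Tinv.le_opNorm v) (Real.sqrt_nonneg _)
      _ = Real.sqrt (matNorm M⁻¹) * ‖Tinv‖ * ‖(v : H)‖ := by rw [hnc]; ring
      _ = Real.sqrt (matNorm M⁻¹) * ‖Tinv‖ * ‖∑ i, X v i • φ i‖ := by rw [← f1' v]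
      _ ≤ Real.sqrt (matNorm M⁻¹) * ‖Tinv‖ * (Real.sqrt (matNorm M) * ‖X v‖) :=
          mul_le_mul_of_nonneg_left (aux_norm_up hM _)
            (mul_nonneg (Real.sqrt_nonneg _) Tinv.opNorm_nonneg)
      _ = Real.sqrt (matNorm M) * Real.sqrt (matNorm M⁻¹) * ‖Tinv‖ * ‖x‖ := by
          rw [hXv]; ring
      _ = Real.sqrt (matNorm M * matNorm M⁻¹) * ‖Tinv‖ * ‖x‖ := by
          rw [Real.sqrt_mul (matNorm_nonneg M)]
  have hlow : ‖Tinv‖ ≤ Real.sqrt (matNorm M * matNorm M⁻¹) * matNorm B := by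
    refine ContinuousLinearMap.opNorm_le_bound _
      (mul_nonneg (Real.sqrt_nonneg _) (matNorm_nonneg _)) ?_
    intro v
    calc ‖Tinv v‖ = ‖∑ i, X (Tinv v) i • φ i‖ := by rw [← f1' (Tinv v), hnc]
      _ ≤ Real.sqrt (matNorm M) * ‖X (Tinv v)‖ := aux_norm_up hM _
      _ = Real.sqrt (matNorm M) * ‖Matrix.toEuclideanCLM (𝕜 := ℂ) B (X v)‖ := by rw [f3]
      _ ≤ Real.sqrt (matNorm M) * (matNorm B * ‖X v‖) :=
          mul_le_mul_of_nonneg_left ((Matrix.toEuclideanCLM (𝕜 := ℂ) B).le_opNorm _)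
            (Real.sqrt_nonneg _)
      _ ≤ Real.sqrt (matNorm M) * (matNorm B *
            (Real.sqrt (matNorm M⁻¹) * ‖∑ i, X v i • φ i‖)) :=
          mul_le_mul_of_nonneg_left
            (mul_le_mul_of_nonneg_left (aux_norm_down hφ hM _) (matNorm_nonneg _))
            (Real.sqrt_nonneg _)
      _ = Real.sqrt (matNorm M * matNorm M⁻¹) * matNorm B * ‖(v : H)‖ := by
          rw [← f1' v, Real.sqrt_mul (matNorm_nonneg M)]; ring
      _ = Real.sqrt (matNorm M * matNorm M⁻¹) * matNorm B * ‖v‖ := by rw [hnc]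
  constructor
  · rcases eq_or_lt_of_le (Real.sqrt_nonneg (matNorm M * matNorm M⁻¹)) with h0 | h0
    · rw [← h0, inv_zero, zero_mul]
      exact matNorm_nonneg _
    · rw [inv_mul_le_iff₀ h0]
      exact hlow
  · exact hupper
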